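/- Let f_A and f_* be neighbor functions, each unbounded above, with inverses g_A and g_* on [f_A(0), ∞) and [f_*(0), ∞) respectively, and let δ_A > 0. Assume that for all 0 ≤ x₁ ≤ x₂ one has f_*(x₂) − f_*(x₁) ≥ (f_A(x₂) − f_A(x₁))/δ_A. Then for every x ≥ 0 the uncertainty interval of (f_*, 1) around x is contained in the uncertainty interval of (f_A, δ_A) around x; that is, g_A(max(f_A(0), f_A(x) − δ_A)) ≤ g_*(max(f_*(0), f_*(x) − 1)) and g_*(f_*(x) + 1) ≤ g_A(f_A(x) + δ_A). -/

import Mathlib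

/-- A neighbor function: strictly increasing, continuous and concave on `[0, ∞)`,
and such that `x ↦ f (exp x)` is convex on `ℝ`. -/
def IsNeighborFun (f : ℝ → ℝ) : Prop :=
  StrictMonoOn f (Set.Ici (0 : ℝ)) ∧ ContinuousOn f (Set.Ici (0 : ℝ)) ∧
    ConcaveOn ℝ (Set.Ici (0 : ℝ)) f ∧ ConvexOn ℝ Set.univ (fun x => f (Real.exp x))

/-- Heterogeneous composition: if the secants of `f⋆` dominate those of `f_A / δ_A`,
then every `(f⋆, 1)`-uncertainty interval is contained in the `(f_A, δ_A)`-uncertainty interval. -/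
theorem heterogeneous_uncertainty_interval_contained (fA fStar gA gStar : ℝ → ℝ)
    (hfA : IsNeighborFun fA) (hfStar : IsNeighborFun fStar)
    (hubA : ∀ M : ℝ, ∃ x : ℝ, 0 ≤ x ∧ M ≤ fA x)
    (hubStar : ∀ M : ℝ, ∃ x : ℝ, 0 ≤ x ∧ M ≤ fStar x)
    (hgA0 : ∀ a : ℝ, fA 0 ≤ a → 0 ≤ gA a)
    (hgAf : ∀ x : ℝ, 0 ≤ x → gA (fA x) = x)
    (hfAg : ∀ a : ℝ, fA 0 ≤ a → fA (gA a) = a)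
    (hgStar0 : ∀ a : ℝ, fStar 0 ≤ a → 0 ≤ gStar a)
    (hgStarf : ∀ x : ℝ, 0 ≤ x → gStar (fStar x) = x)
    (hfStarg : ∀ a : ℝ, fStar 0 ≤ a → fStar (gStar a) = a)
    (δA : ℝ) (hδA : 0 < δA)
    (hsec : ∀ x₁ x₂ : ℝ, 0 ≤ x₁ → x₁ ≤ x₂ →
      (fA x₂ - fA x₁) / δA ≤ fStar x₂ - fStar x₁) :
    ∀ x : ℝ, 0 ≤ x →
      gA (max (fA 0) (fA x - δA)) ≤ gStar (max (fStar 0) (fStar x - 1)) ∧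
        gStar (fStar x + 1) ≤ gA (fA x + δA) := by
  intro x hx
  have hmfA : MonotoneOn fA (Set.Ici (0 : ℝ)) := hfA.1.monotoneOn
  have hmfS : MonotoneOn fStar (Set.Ici (0 : ℝ)) := hfStar.1.monotoneOn
  constructor
  · -- lower bound
    set a := max (fA 0) (fA x - δA) with ha
    set b := max (fStar 0) (fStar x - 1) with hb
    have ha0 : fA 0 ≤ a := le_max_left _ _
    have hb0 : fStar 0 ≤ b := le_max_left _ _
    have hu0 : 0 ≤ gA a := hgA0 a ha0
    have hv0 : 0 ≤ gStar b := hgStar0 b hb0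
    have hfAu : fA (gA a) = a := hfAg a ha0
    have hfSv : fStar (gStar b) = b := hfStarg b hb0
    have hble : b ≤ fStar x := by
      apply max_le (hmfS (Set.mem_Ici.2 le_rfl) (Set.mem_Ici.2 hx) hx)
      linarith
    have hvx : gStar b ≤ x := by
      by_contra h
      push_neg at h
      have := hfStar.1 (Set.mem_Ici.2 hx) (Set.mem_Ici.2 hv0) h
      rw [hfSv] at this; linarith
    have hsec' := hsec (gStar b) x hv0 hvx
    rw [hfSv] at hsec'
    have h1 : fStar x - b ≤ 1 := by
      have : fStar x - 1 ≤ b := le_max_right _ _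
      linarith
    have h2 : fA x - fA (gStar b) ≤ δA := by
      rw [div_le_iff₀ hδA] at hsec'
      nlinarith
    have h3 : a ≤ fA (gStar b) := by
      apply max_le (hmfA (Set.mem_Ici.2 le_rfl) (Set.mem_Ici.2 hv0) hv0)
      linarith
    by_contra h
    push_neg at h
    have := hfA.1 (Set.mem_Ici.2 hv0) (Set.mem_Ici.2 hu0) h
    rw [hfAu] at this; linarith
  · -- upper bound
    have ha0 : fA 0 ≤ fA x + δA := by
      have := hmfA (Set.mem_Ici.2 le_rfl) (Set.mem_Ici.2 hx) hx
      linarith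
    have hy0 : 0 ≤ gA (fA x + δA) := hgA0 _ ha0
    have hfAy : fA (gA (fA x + δA)) = fA x + δA := hfAg _ ha0
    have hxy : x ≤ gA (fA x + δA) := by
      by_contra h
      push_neg at h
      have := hfA.1 (Set.mem_Ici.2 hy0) (Set.mem_Ici.2 hx) h
      rw [hfAy] at this; linarith
    have hsec' := hsec x (gA (fA x + δA)) hx hxy
    rw [hfAy] at hsec'
    have h1 : fStar x + 1 ≤ fStar (gA (fA x + δA)) := by
      have : (fA x + δA - fA x) / δA = 1 := by field_simp; ring
      rw [this] at hsec'; linarith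
    have hb0 : fStar 0 ≤ fStar x + 1 := by
      have := hmfS (Set.mem_Ici.2 le_rfl) (Set.mem_Ici.2 hx) hx
      linarith
    have hv0 : 0 ≤ gStar (fStar x + 1) := hgStar0 _ hb0
    have hfSv : fStar (gStar (fStar x + 1)) = fStar x + 1 := hfStarg _ hb0
    by_contra h
    push_neg at h
    have := hfStar.1 (Set.mem_Ici.2 hy0) (Set.mem_Ici.2 hv0) h
    rw [hfSv] at this
    linarith
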